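/- arXiv:2303.13084 — 2 statements merged into one kernel-verified Lean document; each statement's English description precedes it below -/
import Mathlib

section
/- Let P ⊆ ℝ^d (d ≥ 1) be a full-dimensional lattice polytope with codegree a satisfying P = ⌊aP⌋ + {P}. Then the remainder polytope {P} is not a single point. -/
open Set Pointwise

/-- The set of lattice points of `ℝ^d`. -/
def latticePoints (d : ℕ) : Set (Fin d → ℝ) :=
  {x | ∀ i, ∃ z : ℤ, x i = (z : ℝ)}

/-- A lattice polytope: the convex hull of a finite set of lattice points. -/
def IsLatticePolytope {d : ℕ} (P : Set (Fin d → ℝ)) : Prop :=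
  ∃ V : Finset (Fin d → ℝ), (V : Set (Fin d → ℝ)) ⊆ latticePoints d ∧
    P = convexHull ℝ (V : Set (Fin d → ℝ))

/-- The natural pairing of an integral linear functional with a point of `ℝ^d`. -/
def pairing {d : ℕ} (n : Fin d → ℤ) (x : Fin d → ℝ) : ℝ :=
  ∑ i, (n i : ℝ) * x i

/-- `P = {x | n_F(x) ≥ -h_F}` is an irredundant presentation with primitive
integral inner normals, i.e. the facet presentation of `P`. -/
def IsFacetPresentation {d m : ℕ} (P : Set (Fin d → ℝ))
    (n : Fin m → Fin d → ℤ) (h : Fin m → ℤ) : Prop :=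
  P = {x | ∀ i, pairing (n i) x ≥ -(h i : ℝ)} ∧
  (∀ i, Finset.univ.gcd (n i) = 1) ∧
  (∀ i, ∃ x : Fin d → ℝ, pairing (n i) x < -(h i : ℝ) ∧
    ∀ j, j ≠ i → pairing (n j) x ≥ -(h j : ℝ))

/-- `a` is the codegree of `P`: the least `k ≥ 1` such that `int(kP)` contains
a lattice point. -/
def IsCodegree {d : ℕ} (P : Set (Fin d → ℝ)) (a : ℕ) : Prop :=
  1 ≤ a ∧ (interior ((a : ℝ) • P) ∩ latticePoints d).Nonempty ∧
    ∀ k : ℕ, 1 ≤ k → (interior ((k : ℝ) • P) ∩ latticePoints d).Nonempty → a ≤ k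

/-- The floor polytope `⌊R⌋ = conv(int(R) ∩ ℤ^d)`. -/
def floorPoly {d : ℕ} (R : Set (Fin d → ℝ)) : Set (Fin d → ℝ) :=
  convexHull ℝ (interior R ∩ latticePoints d)

/-- The remainder polytope `{P} = conv{x ∈ ℤ^d | n_F(x) ≥ (a-1)h_F - 1}`,
defined in terms of the facet presentation data and the codegree `a`. -/
def remPoly {d m : ℕ} (n : Fin m → Fin d → ℤ) (h : Fin m → ℤ) (a : ℕ) :
    Set (Fin d → ℝ) :=
  convexHull ℝ {x | x ∈ latticePoints d ∧
    ∀ i, pairing (n i) x ≥ ((a : ℝ) - 1) * (h i : ℝ) - 1}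

/-- The cone `C_P ⊆ ℝ^d × ℝ` over `P`, in terms of the facet presentation. -/
def coneOver {d m : ℕ} (n : Fin m → Fin d → ℤ) (h : Fin m → ℤ) :
    Set ((Fin d → ℝ) × ℝ) :=
  {p | ∀ i, pairing (n i) p.1 ≥ -(p.2 * (h i : ℝ))}

/-- The interior `int(C_P)` of the cone over `P`. -/
def intCone {d m : ℕ} (n : Fin m → Fin d → ℤ) (h : Fin m → ℤ) :
    Set ((Fin d → ℝ) × ℝ) :=
  {p | ∀ i, pairing (n i) p.1 > -(p.2 * (h i : ℝ))}

/-- The anticanonical set `ant(C_P)` of the cone over `P`. -/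
def antCone {d m : ℕ} (n : Fin m → Fin d → ℤ) (h : Fin m → ℤ) :
    Set ((Fin d → ℝ) × ℝ) :=
  {p | ∀ i, pairing (n i) p.1 ≥ -(p.2 * (h i : ℝ)) - 1}

/-- Lattice points of `ℝ^d × ℝ = ℝ^{d+1}`. -/
def latticePairs (d : ℕ) : Set ((Fin d → ℝ) × ℝ) :=
  {p | p.1 ∈ latticePoints d ∧ ∃ z : ℤ, p.2 = (z : ℝ)}

/-- The nearly Gorenstein condition with respect to a given facet presentation:
`(C_P ∩ ℤ^{d+1}) \ {0} ⊆ (int(C_P) ∩ ℤ^{d+1}) + (ant(C_P) ∩ ℤ^{d+1})`. -/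
def NGIncl {d m : ℕ} (n : Fin m → Fin d → ℤ) (h : Fin m → ℤ) : Prop :=
  (coneOver n h ∩ latticePairs d) \ {(0 : (Fin d → ℝ) × ℝ)} ⊆
    (intCone n h ∩ latticePairs d) + (antCone n h ∩ latticePairs d)

/-- A full-dimensional lattice polytope is nearly Gorenstein if the nearly
Gorenstein inclusion holds for its facet presentation. -/
def NearlyGorenstein {d : ℕ} (P : Set (Fin d → ℝ)) : Prop :=
  ∃ (m : ℕ) (n : Fin m → Fin d → ℤ) (h : Fin m → ℤ),
    IsFacetPresentation P n h ∧ NGIncl n h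

/-- The polar dual `Q* = {y | y(x) ≥ -1 for all x ∈ Q}`. -/
def polarDual {d : ℕ} (Q : Set (Fin d → ℝ)) : Set (Fin d → ℝ) :=
  {y | ∀ x ∈ Q, (∑ i, y i * x i) ≥ -1}

/-- A reflexive polytope: a lattice polytope with `0` in its interior whose
polar dual is again a lattice polytope. -/
def IsReflexive {d : ℕ} (Q : Set (Fin d → ℝ)) : Prop :=
  IsLatticePolytope Q ∧ (0 : Fin d → ℝ) ∈ interior Q ∧
    IsLatticePolytope (polarDual Q)

/-- A Gorenstein polytope: some dilate `kP`, translated by a lattice vector,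
is reflexive. -/
def IsGorenstein {d : ℕ} (P : Set (Fin d → ℝ)) : Prop :=
  ∃ (k : ℕ) (w : Fin d → ℝ), 1 ≤ k ∧ w ∈ latticePoints d ∧
    IsReflexive ((fun x => x - w) '' ((k : ℝ) • P))

/-- The integer decomposition property. -/
def IsIDP {d : ℕ} (P : Set (Fin d → ℝ)) : Prop :=
  ∀ k : ℕ, 1 ≤ k → ∀ x ∈ ((k : ℝ) • P) ∩ latticePoints d,
    ∃ y : Fin k → Fin d → ℝ, (∀ j, y j ∈ P ∩ latticePoints d) ∧ x = ∑ j, y j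

/-- Minkowski indecomposability of a lattice polytope. -/
def IsIndecomposable {d : ℕ} (P : Set (Fin d → ℝ)) : Prop :=
  (¬ ∃ p : Fin d → ℝ, P = {p}) ∧
  ∀ P₁ P₂ : Set (Fin d → ℝ), IsLatticePolytope P₁ → IsLatticePolytope P₂ →
    P = P₁ + P₂ → (∃ p, P₁ = {p}) ∨ (∃ p, P₂ = {p})

/-- A `(0,1)`-polytope: the convex hull of a set of `(0,1)`-vectors. -/
def Is01Polytope {d : ℕ} (P : Set (Fin d → ℝ)) : Prop :=
  ∃ V : Finset (Fin d → ℝ), (∀ v ∈ V, ∀ i, v i = 0 ∨ v i = 1) ∧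
    P = convexHull ℝ (V : Set (Fin d → ℝ))

lemma pairing_isLinearMap {d : ℕ} (n : Fin d → ℤ) : IsLinearMap ℝ (pairing n) := by
  constructor
  · intro x y
    simp only [pairing, Pi.add_apply, mul_add, Finset.sum_add_distrib]
  · intro c x
    simp only [pairing, Pi.smul_apply, smul_eq_mul, Finset.mul_sum]
    exact Finset.sum_congr rfl fun i _ => by ring

lemma pairing_add {d : ℕ} (n : Fin d → ℤ) (x y : Fin d → ℝ) :
    pairing n (x + y) = pairing n x + pairing n y := (pairing_isLinearMap n).map_add x y

lemma pairing_smul {d : ℕ} (n : Fin d → ℤ) (c : ℝ) (x : Fin d → ℝ) :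
    pairing n (c • x) = c * pairing n x := (pairing_isLinearMap n).map_smul c x

lemma pairing_neg {d : ℕ} (n : Fin d → ℤ) (x : Fin d → ℝ) :
    pairing n (-x) = -pairing n x := (pairing_isLinearMap n).map_neg x

lemma pairing_sub {d : ℕ} (n : Fin d → ℤ) (x y : Fin d → ℝ) :
    pairing n (x - y) = pairing n x - pairing n y := (pairing_isLinearMap n).map_sub x y

lemma pairing_continuous {d : ℕ} (n : Fin d → ℤ) : Continuous (pairing n) :=
  continuous_finset_sum _ fun i _ => continuous_const.mul (continuous_apply i)

lemma pairing_int {d : ℕ} (n : Fin d → ℤ) {x : Fin d → ℝ} (hx : x ∈ latticePoints d) :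
    ∃ z : ℤ, pairing n x = (z : ℝ) := by
  choose f hf using hx
  refine ⟨∑ i, n i * f i, ?_⟩
  rw [pairing]
  push_cast
  exact Finset.sum_congr rfl fun i _ => by rw [hf i]

lemma lattice_gap {d : ℕ} {n : Fin d → ℤ} {x : Fin d → ℝ} (hx : x ∈ latticePoints d)
    {c : ℤ} (hlt : (c : ℝ) < pairing n x) : (c : ℝ) + 1 ≤ pairing n x := by
  obtain ⟨z, hz⟩ := pairing_int n hx
  rw [hz] at hlt ⊢
  exact_mod_cast Int.add_one_le_of_lt (by exact_mod_cast hlt)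

lemma isOpen_strict {d m : ℕ} (n : Fin m → Fin d → ℤ) (c : Fin m → ℝ) :
    IsOpen {x : Fin d → ℝ | ∀ i, pairing (n i) x > c i} := by
  have : {x : Fin d → ℝ | ∀ i, pairing (n i) x > c i} = ⋂ i, {x | c i < pairing (n i) x} := by
    ext x; simp [Set.mem_iInter]
  rw [this]
  exact isOpen_iInter_of_finite fun i => isOpen_lt continuous_const (pairing_continuous _)

lemma mem_interior_gt {d : ℕ} {S : Set (Fin d → ℝ)} {nv : Fin d → ℤ} {c : ℝ}
    (hS : S ⊆ {x | pairing nv x ≥ c}) (hnv : ∃ j, nv j ≠ 0)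
    {x : Fin d → ℝ} (hx : x ∈ interior S) : pairing nv x > c := by
  obtain ⟨j, hj⟩ := hnv
  have hge : pairing nv x ≥ c := hS (interior_subset hx)
  rcases lt_or_eq_of_le hge with hgt | heq
  · exact hgt
  exfalso
  rw [mem_interior_iff_mem_nhds, Metric.mem_nhds_iff] at hx
  obtain ⟨ε, hε, hball⟩ := hx
  set v : Fin d → ℝ := fun k => if k = j then ((nv j : ℝ)) else 0 with hv
  have hpv : pairing nv v = (nv j : ℝ) * (nv j : ℝ) := by
    rw [pairing]
    have : ∀ k ∈ Finset.univ, (nv k : ℝ) * v k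
        = if k = j then (nv j : ℝ) * (nv j : ℝ) else 0 := by
      intro k _
      simp only [hv]
      split <;> simp_all
    rw [Finset.sum_congr rfl this, Finset.sum_ite_eq' Finset.univ j]
    simp
  have hvnorm : ‖v‖ ≥ 0 := norm_nonneg v
  set δ : ℝ := ε / (2 * (‖v‖ + 1)) with hδdef
  have hδ : 0 < δ := by positivity
  have hmem : x - δ • v ∈ Metric.ball x ε := by
    rw [Metric.mem_ball, dist_eq_norm]
    have : x - δ • v - x = -(δ • v) := by abel
    rw [this, norm_neg, norm_smul, Real.norm_eq_abs, abs_of_pos hδ]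
    rw [hδdef]
    rw [div_mul_eq_mul_div, div_lt_iff₀ (by positivity)]
    nlinarith [hε, hvnorm]
  have h1 : pairing nv (x - δ • v) ≥ c := hS (hball hmem)
  have h2 : pairing nv (x - δ • v) = pairing nv x - δ * pairing nv v := by
    rw [pairing_sub, pairing_smul]
  have hjj : (0:ℝ) < (nv j : ℝ) * (nv j : ℝ) := by
    have : (nv j : ℝ) ≠ 0 := Int.cast_ne_zero.mpr hj
    exact mul_self_pos.mpr this
  nlinarith [mul_pos hδ hjj]

lemma smul_presentation {d m : ℕ} {P : Set (Fin d → ℝ)} {n : Fin m → Fin d → ℤ} {h : Fin m → ℤ}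
    (hP : P = {x | ∀ i, pairing (n i) x ≥ -(h i : ℝ)}) {t : ℝ} (ht : 0 < t) :
    t • P = {x : Fin d → ℝ | ∀ i, pairing (n i) x ≥ -(t * (h i : ℝ))} := by
  ext x
  rw [Set.mem_smul_set_iff_inv_smul_mem₀ ht.ne', hP]
  simp only [Set.mem_setOf_eq, pairing_smul]
  constructor
  · intro hx i
    have := hx i
    have h2 := mul_le_mul_of_nonneg_left this ht.le
    rw [← mul_assoc, mul_inv_cancel₀ ht.ne', one_mul] at h2
    linarith
  · intro hx i
    have := hx i
    have h2 := mul_le_mul_of_nonneg_left this (inv_nonneg.mpr ht.le)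
    calc -(h i : ℝ) = t⁻¹ * -(t * (h i : ℝ)) := by field_simp
    _ ≤ t⁻¹ * pairing (n i) x := h2
  

lemma convexHull_pairing_ge {d : ℕ} {S : Set (Fin d → ℝ)} {nv : Fin d → ℤ} {c : ℝ}
    (hS : ∀ x ∈ S, pairing nv x ≥ c) :
    ∀ x ∈ convexHull ℝ S, pairing nv x ≥ c := fun _ hx =>
  convexHull_min hS (convex_halfSpace_ge (pairing_isLinearMap nv) c) hx



theorem stmt_16 {d : ℕ} (hd : 1 ≤ d) (P : Set (Fin d → ℝ))
    (hP : IsLatticePolytope P) (hfull : (interior P).Nonempty)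
    {m : ℕ} (n : Fin m → Fin d → ℤ) (h : Fin m → ℤ)
    (hpres : IsFacetPresentation P n h)
    (a : ℕ) (ha : IsCodegree P a)
    (hdecomp : P = floorPoly ((a : ℝ) • P) + remPoly n h a) :
    ¬ ∃ p : Fin d → ℝ, remPoly n h a = {p} := by
  rintro ⟨p, hrem⟩
  obtain ⟨hpres1, hprim, hirr⟩ := hpres
  obtain ⟨ha1, hcod2, hamin⟩ := ha
  -- the generating set of `remPoly` consists exactly of `p`
  have hpmem : p ∈ latticePoints d ∧
      ∀ i, pairing (n i) p ≥ ((a : ℝ) - 1) * (h i : ℝ) - 1 := by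
    have hne : {x | x ∈ latticePoints d ∧
        ∀ i, pairing (n i) x ≥ ((a : ℝ) - 1) * (h i : ℝ) - 1}.Nonempty := by
      by_contra hc
      rw [Set.not_nonempty_iff_eq_empty] at hc
      rw [remPoly, hc, convexHull_empty] at hrem
      exact (Set.singleton_ne_empty p) hrem.symm
    obtain ⟨x, hx⟩ := hne
    have hxp : x ∈ ({p} : Set (Fin d → ℝ)) := by
      rw [← hrem, remPoly]; exact subset_convexHull ℝ _ hx
    rw [Set.mem_singleton_iff] at hxp
    rwa [hxp] at hx
  obtain ⟨hplat, hpge⟩ := hpmem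
  -- case m = 0 : remPoly is the hull of all lattice points, not a singleton
  rcases Nat.eq_zero_or_pos m with hm | hm
  · subst hm
    have hgen : ∀ x ∈ latticePoints d, x = p := by
      intro x hx
      have : x ∈ ({p} : Set (Fin d → ℝ)) := by
        rw [← hrem, remPoly]
        exact subset_convexHull ℝ _ ⟨hx, fun i => i.elim0⟩
      rwa [Set.mem_singleton_iff] at this
    have h0 : (0 : Fin d → ℝ) = p := hgen 0 (fun i => ⟨0, by simp⟩)
    have he : (fun i : Fin d => if (i : ℕ) = 0 then (1:ℝ) else 0) = p := by
      refine hgen _ (fun i => ⟨if (i : ℕ) = 0 then 1 else 0, ?_⟩)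
      split <;> simp
    have hcontra := congrFun (he.trans h0.symm) ⟨0, hd⟩
    simp at hcontra
  -- each normal is nonzero
  have hnz : ∀ i, ∃ j, n i j ≠ 0 := by
    intro i
    by_contra hc
    push_neg at hc
    have h0 : Finset.univ.gcd (n i) = 0 := Finset.gcd_eq_zero_iff.mpr fun j _ => hc j
    have h1 := hprim i
    omega
  have hsubi : ∀ i, P ⊆ {x | pairing (n i) x ≥ -(h i : ℝ)} := by
    intro i y hy
    rw [hpres1] at hy
    exact hy i
  -- scaled presentation of aP
  have hapos : (0:ℝ) < (a : ℝ) := by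
    have : (1:ℝ) ≤ (a:ℝ) := by exact_mod_cast ha1
    linarith
  have hsmulA : (a : ℝ) • P = {x : Fin d → ℝ |
      ∀ i, pairing (n i) x ≥ -((a : ℝ) * (h i : ℝ))} := smul_presentation hpres1 hapos
  have hsubAi : ∀ i, (a : ℝ) • P ⊆ {x | pairing (n i) x ≥ -((a : ℝ) * (h i : ℝ))} := by
    intro i y hy
    rw [hsmulA] at hy
    exact hy i
  -- interior point of P
  obtain ⟨x0, hx0i⟩ := hfull
  -- KEY upper bound : pairing (n i) p ≤ (a-1) h i - 1
  have hple : ∀ i, pairing (n i) p ≤ ((a : ℝ) - 1) * (h i : ℝ) - 1 := by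
    intro i
    obtain ⟨x, hxlt, hxge⟩ := hirr i
    have hAge : pairing (n i) x0 ≥ -(h i : ℝ) := hsubi i (interior_subset hx0i)
    have hABpos : (0:ℝ) < pairing (n i) x0 - pairing (n i) x := by linarith
    set t : ℝ := (pairing (n i) x0 + (h i : ℝ)) / (pairing (n i) x0 - pairing (n i) x)
      with htdef
    have ht0 : 0 ≤ t := div_nonneg (by linarith) hABpos.le
    have ht1 : t ≤ 1 := (div_le_one hABpos).mpr (by linarith)
    have hti : t * (pairing (n i) x0 - pairing (n i) x)
        = pairing (n i) x0 + (h i : ℝ) := div_mul_cancel₀ _ hABpos.ne'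
    set q : Fin d → ℝ := (1 - t) • x0 + t • x with hqdef
    have hqpair : ∀ j, pairing (n j) q
        = (1 - t) * pairing (n j) x0 + t * pairing (n j) x := by
      intro j; rw [hqdef, pairing_add, pairing_smul, pairing_smul]
    have hqval : pairing (n i) q = -(h i : ℝ) := by
      rw [hqpair]; linear_combination -hti
    have hqP : q ∈ P := by
      rw [hpres1]
      intro j
      rcases eq_or_ne j i with rfl | hji
      · rw [hqval]
      · have h1 := hxge j hji
        have h2 : pairing (n j) x0 ≥ -(h j : ℝ) := hsubi j (interior_subset hx0i)
        rw [hqpair]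
        nlinarith
    have hq2 : q ∈ floorPoly ((a : ℝ) • P) + ({p} : Set (Fin d → ℝ)) := by
      rw [← hrem, ← hdecomp]; exact hqP
    obtain ⟨f, hf, y, hy, hfy⟩ := Set.mem_add.mp hq2
    rw [Set.mem_singleton_iff] at hy
    rw [hy] at hfy
    have hfge : pairing (n i) f ≥ -((a : ℝ) * (h i : ℝ)) + 1 := by
      refine convexHull_pairing_ge ?_ f hf
      rintro w ⟨hwint, hwlat⟩
      have hgt := mem_interior_gt (hsubAi i) (hnz i) hwint
      have := lattice_gap hwlat (c := -((a : ℤ) * h i)) (by push_cast; exact hgt)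
      push_cast at this
      linarith
    have hsum : pairing (n i) f + pairing (n i) p = -(h i : ℝ) := by
      rw [← pairing_add, hfy, hqval]
    nlinarith
  rcases le_or_gt 2 a with ha2 | ha2
  · -- case a ≥ 2 : -p is an interior lattice point of (a-1)P, contradicting codegree
    have ha2' : (2 : ℝ) ≤ (a : ℝ) := by exact_mod_cast ha2
    have htv : ((a - 1 : ℕ) : ℝ) = (a : ℝ) - 1 := by
      push_cast [Nat.cast_sub ha1]; ring
    have htpos : (0 : ℝ) < ((a - 1 : ℕ) : ℝ) := by rw [htv]; linarith
    have hsmul := smul_presentation hpres1 htpos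
    have hUopen := isOpen_strict n (fun i => -(((a - 1 : ℕ) : ℝ) * (h i : ℝ)))
    have hUsub : {x : Fin d → ℝ | ∀ i, pairing (n i) x > -(((a - 1 : ℕ) : ℝ) * (h i : ℝ))}
        ⊆ ((a - 1 : ℕ) : ℝ) • P := by
      rw [hsmul]; exact fun x hx i => (hx i).le
    have hmemU : -p ∈ {x : Fin d → ℝ |
        ∀ i, pairing (n i) x > -(((a - 1 : ℕ) : ℝ) * (h i : ℝ))} := by
      intro i
      rw [pairing_neg]
      have := hple i
      rw [htv]
      linarith
    have hint : -p ∈ interior (((a - 1 : ℕ) : ℝ) • P) :=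
      interior_maximal hUsub hUopen hmemU
    have hlat : -p ∈ latticePoints d := by
      intro i
      obtain ⟨z, hz⟩ := hplat i
      exact ⟨-z, by rw [Pi.neg_apply, hz]; push_cast; ring⟩
    have := hamin (a - 1) (by omega) ⟨-p, hint, hlat⟩
    omega
  · -- case a = 1 : P translates into itself, contradicting boundedness
    have haa : a = 1 := by omega
    subst haa
    simp only [Nat.cast_one, one_smul] at hcod2
    obtain ⟨z0, hz0i, hz0l⟩ := hcod2
    have hz0gap : ∀ i, pairing (n i) z0 ≥ -(h i : ℝ) + 1 := by
      intro i
      have hgt := mem_interior_gt (hsubi i) (hnz i) hz0i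
      have := lattice_gap hz0l (c := -(h i)) (by push_cast; exact hgt)
      push_cast at this
      linarith
    have hple1 : ∀ i, pairing (n i) p ≤ -1 := by
      intro i
      have := hple i
      norm_num at this
      linarith
    -- P is bounded
    obtain ⟨V, hVlat, hPV⟩ := hP
    have hc : IsCompact (convexHull ℝ (V : Set (Fin d → ℝ))) :=
      V.finite_toSet.isCompact_convexHull ℝ
    obtain ⟨C, hC⟩ := (hc.image continuous_norm).bddAbove
    have hbound : ∀ x ∈ P, ‖x‖ ≤ C := by
      intro x hx
      rw [hPV] at hx
      exact hC ⟨x, hx, rfl⟩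
    -- but P contains the unbounded sequence z0 - k • p
    have hpne : p ≠ 0 := by
      intro h0
      have h1 := hple1 ⟨0, hm⟩
      rw [h0] at h1
      have h2 : pairing (n ⟨0, hm⟩) (0 : Fin d → ℝ) = 0 := by simp [pairing]
      rw [h2] at h1
      norm_num at h1
    have hpnorm : 0 < ‖p‖ := norm_pos_iff.mpr hpne
    obtain ⟨k, hk⟩ := exists_nat_gt ((C + ‖z0‖) / ‖p‖)
    have hkp : C + ‖z0‖ < (k : ℝ) * ‖p‖ := (div_lt_iff₀ hpnorm).mp hk
    have hwP : z0 - (k : ℝ) • p ∈ P := by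
      rw [hpres1]
      intro i
      rw [pairing_sub, pairing_smul]
      have h1 := hz0gap i
      have h2 := hple1 i
      have hk0 : (0:ℝ) ≤ (k : ℝ) := Nat.cast_nonneg k
      have h3 : (k : ℝ) * pairing (n i) p ≤ (k : ℝ) * (-1) :=
        mul_le_mul_of_nonneg_left h2 hk0
      linarith
    have hwn : ‖z0 - (k : ℝ) • p‖ ≤ C := hbound _ hwP
    have hlow : (k : ℝ) * ‖p‖ - ‖z0‖ ≤ ‖z0 - (k : ℝ) • p‖ := by
      have h1 : ‖(k : ℝ) • p‖ - ‖z0‖ ≤ ‖(k : ℝ) • p - z0‖ := norm_sub_norm_le _ _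
      rw [norm_sub_rev, norm_smul, Real.norm_eq_abs, abs_of_nonneg (Nat.cast_nonneg k)] at h1
      exact h1
    linarith
end

section
/- Let P ⊆ ℝ^d be a full-dimensional (0,1)-polytope. Then there exist a permutation σ of the coordinates of ℝ^d, positive integers d_1, …, d_s with d_1 + ⋯ + d_s = d, and Minkowski indecomposable full-dimensional (0,1)-polytopes P_i ⊆ ℝ^{d_i} (i = 1, …, s) such that the image of P under the coordinate permutation σ equals the direct product P_1 × ⋯ × P_s. -/
open Set Pointwise

namespace Stmt17

/-- The conclusion of the main theorem, in preimage form. -/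
def DecompEq {d : ℕ} (P : Set (Fin d → ℝ)) : Prop :=
  ∃ (s : ℕ) (dims : Fin s → ℕ) (e : Fin d ≃ (Σ i : Fin s, Fin (dims i)))
    (Q : ∀ i : Fin s, Set (Fin (dims i) → ℝ)),
    1 ≤ s ∧ (∀ i, 1 ≤ dims i) ∧ (∑ i, dims i = d) ∧
    (∀ i, Is01Polytope (Q i) ∧ (interior (Q i)).Nonempty ∧
      IsIndecomposable (Q i)) ∧
    P = {x | ∀ i, (fun j => x (e.symm ⟨i, j⟩)) ∈ Q i}

/-- Distributing a sum of sigma types. -/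
def sumSigma {ι κ : Type} (f : ι → ℕ) (g : κ → ℕ) :
    ((Σ i, Fin (f i)) ⊕ (Σ j, Fin (g j))) ≃ Σ t : ι ⊕ κ, Fin (Sum.elim f g t) where
  toFun := Sum.elim (fun p => ⟨.inl p.1, p.2⟩) (fun p => ⟨.inr p.1, p.2⟩)
  invFun p :=
    match p with
    | ⟨.inl i, j⟩ => .inl ⟨i, j⟩
    | ⟨.inr i, j⟩ => .inr ⟨i, j⟩
  left_inv := by rintro (⟨i, j⟩ | ⟨i, j⟩) <;> rfl
  right_inv := by rintro ⟨(i | i), j⟩ <;> rfl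

lemma decompEq_transport {d : ℕ} {P : Set (Fin d → ℝ)} {ι : Type} [Fintype ι]
    [Nonempty ι] (dims' : ι → ℕ) (e' : Fin d ≃ Σ t : ι, Fin (dims' t))
    (Q' : ∀ t, Set (Fin (dims' t) → ℝ))
    (h1 : ∀ t, 1 ≤ dims' t) (h2 : ∑ t, dims' t = d)
    (h3 : ∀ t, Is01Polytope (Q' t) ∧ (interior (Q' t)).Nonempty ∧
      IsIndecomposable (Q' t))
    (h4 : P = {x | ∀ t, (fun j => x (e'.symm ⟨t, j⟩)) ∈ Q' t}) : DecompEq P := by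
  classical
  set s := Fintype.card ι with hs
  set w : Fin s ≃ ι := (Fintype.equivFin ι).symm with hw
  refine ⟨s, fun a => dims' (w a), e'.trans (Equiv.sigmaCongrLeft w).symm,
    fun a => Q' (w a), Fintype.card_pos, fun a => h1 (w a), ?_, fun a => h3 (w a), ?_⟩
  · rw [← h2]; exact Equiv.sum_comp w dims'
  · rw [h4]; ext x
    simp only [Set.mem_setOf_eq]
    constructor
    · intro h a
      exact h (w a)
    · intro h t
      obtain ⟨a, rfl⟩ : ∃ a, w a = t := ⟨w.symm t, w.apply_symm_apply t⟩
      exact h a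

lemma decompEq_base {d : ℕ} (P : Set (Fin d → ℝ)) (hd : 1 ≤ d)
    (hP : Is01Polytope P) (hfull : (interior P).Nonempty)
    (hind : IsIndecomposable P) : DecompEq P := by
  refine ⟨1, fun _ => d,
    ⟨fun j => ⟨0, j⟩, fun p => p.2, fun j => rfl, ?_⟩,
    fun _ => P, le_refl 1, fun _ => hd, by simp, fun _ => ⟨hP, hfull, hind⟩, ?_⟩
  · rintro ⟨i, j⟩
    have : (0 : Fin 1) = i := Subsingleton.elim _ _
    cases this
    rfl
  · ext x
    simp only [Set.mem_setOf_eq]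
    constructor
    · intro hx _
      exact hx
    · intro hx
      exact hx 0

lemma decompEq_combine {d k l : ℕ} (g : Fin d ≃ Fin k ⊕ Fin l)
    {P : Set (Fin d → ℝ)} {R₁ : Set (Fin k → ℝ)} {R₂ : Set (Fin l → ℝ)}
    (hkl : k + l = d)
    (hP : P = {x : Fin d → ℝ | (fun j => x (g.symm (Sum.inl j))) ∈ R₁ ∧
      (fun j => x (g.symm (Sum.inr j))) ∈ R₂})
    (h₁ : DecompEq R₁) (h₂ : DecompEq R₂) : DecompEq P := by
  obtain ⟨s₁, dims₁, e₁, Q₁, hs₁, hd₁, hsum₁, hQ₁, hset₁⟩ := h₁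
  obtain ⟨s₂, dims₂, e₂, Q₂, hs₂, hd₂, hsum₂, hQ₂, hset₂⟩ := h₂
  haveI : Nonempty (Fin s₁) := ⟨⟨0, hs₁⟩⟩
  haveI : Nonempty (Fin s₁ ⊕ Fin s₂) := ⟨Sum.inl Classical.ofNonempty⟩
  refine decompEq_transport (Sum.elim dims₁ dims₂)
    (g.trans ((e₁.sumCongr e₂).trans (sumSigma dims₁ dims₂)))
    (fun t => match t with
      | .inl i => Q₁ i
      | .inr i => Q₂ i) ?_ ?_ ?_ ?_
  · rintro (i | i)
    · exact hd₁ i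
    · exact hd₂ i
  · rw [Fintype.sum_sum_type]
    simpa using by rw [hsum₁, hsum₂, hkl]
  · rintro (i | i)
    · exact hQ₁ i
    · exact hQ₂ i
  · rw [hP]; ext x
    simp only [Set.mem_setOf_eq]
    constructor
    · rintro ⟨hx1, hx2⟩ t
      rw [hset₁] at hx1
      rw [hset₂] at hx2
      rcases t with i | i
      · exact hx1 i
      · exact hx2 i
    · intro h
      constructor
      · rw [hset₁]; intro i; exact h (.inl i)
      · rw [hset₂]; intro i; exact h (.inr i)

end Stmt17
namespace Stmt17

lemma singleton_interior_empty {d : ℕ} (hd : 1 ≤ d) (p : Fin d → ℝ) :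
    interior ({p} : Set (Fin d → ℝ)) = ∅ := by
  haveI : Nontrivial (Fin d → ℝ) := by
    refine ⟨0, 1, fun h => ?_⟩
    have := congrFun h ⟨0, hd⟩
    norm_num at this
  exact interior_singleton p

lemma geo {d : ℕ} (hd : 1 ≤ d) (P : Set (Fin d → ℝ)) (hP : Is01Polytope P)
    (hfull : (interior P).Nonempty) (hnind : ¬ IsIndecomposable P) :
    ∃ (k l : ℕ) (g : Fin d ≃ Fin k ⊕ Fin l) (R₁ : Set (Fin k → ℝ))
      (R₂ : Set (Fin l → ℝ)),
      1 ≤ k ∧ 1 ≤ l ∧ k + l = d ∧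
      Is01Polytope R₁ ∧ (interior R₁).Nonempty ∧
      Is01Polytope R₂ ∧ (interior R₂).Nonempty ∧
      P = {x | (fun j => x (g.symm (Sum.inl j))) ∈ R₁ ∧
        (fun j => x (g.symm (Sum.inr j))) ∈ R₂} := by
  classical
  obtain ⟨V, hV01, hPV⟩ := hP
  have hPne : P.Nonempty := hfull.mono interior_subset
  have hnotpt : ¬ ∃ p : Fin d → ℝ, P = {p} := by
    rintro ⟨p, rfl⟩
    rw [singleton_interior_empty hd p] at hfull
    exact Set.not_nonempty_empty hfull
  have hB : ¬ ∀ P₁ P₂ : Set (Fin d → ℝ), IsLatticePolytope P₁ →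
      IsLatticePolytope P₂ → P = P₁ + P₂ →
      (∃ p, P₁ = {p}) ∨ (∃ p, P₂ = {p}) :=
    fun hB => hnind ⟨hnotpt, hB⟩
  push_neg at hB
  obtain ⟨P₁, P₂, hL₁, hL₂, hPsum, hnp₁, hnp₂⟩ := hB
  obtain ⟨V₁, hV₁lat, rfl⟩ := hL₁
  obtain ⟨V₂, hV₂lat, rfl⟩ := hL₂
  -- P lies in the unit cube
  have hcube : P ⊆ {x : Fin d → ℝ | ∀ i, x i ∈ Set.Icc (0:ℝ) 1} := by
    rw [hPV]
    refine convexHull_min ?_ ?_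
    · intro v hv i
      rcases hV01 v hv i with h | h <;> simp [h]
    · have hpi : {x : Fin d → ℝ | ∀ i, x i ∈ Set.Icc (0:ℝ) 1} =
          Set.pi Set.univ (fun _ => Set.Icc (0:ℝ) 1) := by
        ext x
        constructor
        · intro h i _
          exact h i
        · intro h i
          exact h i (Set.mem_univ i)
      rw [hpi]
      exact convex_pi fun i _ => convex_Icc 0 1
  -- both factors nonempty
  obtain ⟨x₀, hx₀⟩ := hPne
  have hx₀' := hx₀
  rw [hPsum] at hx₀'
  obtain ⟨u₀, hu₀, w₀, hw₀, hx₀e⟩ := Set.mem_add.mp hx₀'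
  have hne₁ : V₁.Nonempty := Finset.coe_nonempty.mp (convexHull_nonempty_iff.mp ⟨u₀, hu₀⟩)
  have hne₂ : V₂.Nonempty := Finset.coe_nonempty.mp (convexHull_nonempty_iff.mp ⟨w₀, hw₀⟩)
  -- coordinatewise minima
  set a : Fin d → ℝ := fun i => V₁.inf' hne₁ (fun v => v i) with ha
  set b : Fin d → ℝ := fun i => V₂.inf' hne₂ (fun w => w i) with hb
  have hint₁ : ∀ v ∈ V₁, ∀ i, ∃ z : ℤ, v i = (z : ℝ) :=
    fun v hv i => hV₁lat (Finset.mem_coe.mpr hv) i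
  have hint₂ : ∀ w ∈ V₂, ∀ i, ∃ z : ℤ, w i = (z : ℝ) :=
    fun w hw i => hV₂lat (Finset.mem_coe.mpr hw) i
  have hkey : ∀ v ∈ V₁, ∀ w ∈ V₂, ∀ i, 0 ≤ v i + w i ∧ v i + w i ≤ 1 := by
    intro v hv w hw i
    have hvP : v + w ∈ P := by
      rw [hPsum]
      exact Set.add_mem_add (subset_convexHull ℝ _ (Finset.mem_coe.mpr hv))
        (subset_convexHull ℝ _ (Finset.mem_coe.mpr hw))
    have hc := hcube hvP i
    simpa using hc
  -- the dichotomy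
  have hdich : ∀ i, (∀ v ∈ V₁, v i = a i) ∨ (∀ w ∈ V₂, w i = b i) := by
    intro i
    by_contra hcon
    push_neg at hcon
    obtain ⟨⟨v, hv, hvne⟩, ⟨w, hw, hwne⟩⟩ := hcon
    have hav : a i ≤ v i := Finset.inf'_le _ hv
    have hbw : b i ≤ w i := Finset.inf'_le _ hw
    obtain ⟨vm, hvm, hvme⟩ := Finset.exists_mem_eq_inf' hne₁ (fun v => v i)
    obtain ⟨wm, hwm, hwme⟩ := Finset.exists_mem_eq_inf' hne₂ (fun w => w i)
    have hai : a i = vm i := hvme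
    have hbi : b i = wm i := hwme
    obtain ⟨zv, hzv⟩ := hint₁ v hv i
    obtain ⟨za, hza⟩ := hint₁ vm hvm i
    obtain ⟨zw, hzw⟩ := hint₂ w hw i
    obtain ⟨zb, hzb⟩ := hint₂ wm hwm i
    have h1 : a i + 1 ≤ v i := by
      have hlt : (za : ℝ) < (zv : ℝ) := by
        rw [← hza, ← hzv, ← hai]
        exact lt_of_le_of_ne hav (Ne.symm hvne)
      have hzlt : za + 1 ≤ zv := by exact_mod_cast hlt
      rw [hai, hza, hzv]
      exact_mod_cast hzlt
    have h2 : b i + 1 ≤ w i := by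
      have hlt : (zb : ℝ) < (zw : ℝ) := by
        rw [← hzb, ← hzw, ← hbi]
        exact lt_of_le_of_ne hbw (Ne.symm hwne)
      have hzlt : zb + 1 ≤ zw := by exact_mod_cast hlt
      rw [hbi, hzb, hzw]
      exact_mod_cast hzlt
    have h0 : 0 ≤ a i + b i := by
      rw [hai, hbi]
      exact (hkey vm hvm wm hwm i).1
    have h3 : v i + w i ≤ 1 := (hkey v hv w hw i).2
    linarith
  -- the support of the first factor
  set Aset : Finset (Fin d) := Finset.univ.filter (fun i => ¬ ∀ v ∈ V₁, v i = a i)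
    with hAset
  have hmemA : ∀ i ∈ Aset, ∀ w ∈ V₂, w i = b i := by
    intro i hi
    rw [hAset, Finset.mem_filter] at hi
    exact (hdich i).resolve_left hi.2
  have hmemA' : ∀ i, i ∉ Aset → ∀ v ∈ V₁, v i = a i := by
    intro i hi
    by_contra h
    exact hi (by rw [hAset, Finset.mem_filter]; exact ⟨Finset.mem_univ i, h⟩)
  -- constancy on the hulls
  have hconstset : ∀ (i : Fin d) (c : ℝ), Convex ℝ {x : Fin d → ℝ | x i = c} := by
    intro i c x hx y hy p q hp hq hpq
    simp only [Set.mem_setOf_eq] at hx hy ⊢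
    simp only [Pi.add_apply, Pi.smul_apply, smul_eq_mul, hx, hy]
    rw [← add_mul, hpq, one_mul]
  have hconst₂ : ∀ i ∈ Aset, ∀ w ∈ convexHull ℝ (V₂ : Set (Fin d → ℝ)), w i = b i := by
    intro i hi
    have hsub : convexHull ℝ (V₂ : Set (Fin d → ℝ)) ⊆ {x : Fin d → ℝ | x i = b i} :=
      convexHull_min (fun w hw => hmemA i hi w (Finset.mem_coe.mp hw)) (hconstset i (b i))
    exact fun w hw => hsub hw
  have hconst₁ : ∀ i, i ∉ Aset → ∀ u ∈ convexHull ℝ (V₁ : Set (Fin d → ℝ)), u i = a i := by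
    intro i hi
    have hsub : convexHull ℝ (V₁ : Set (Fin d → ℝ)) ⊆ {x : Fin d → ℝ | x i = a i} :=
      convexHull_min (fun v hv => hmemA' i hi v (Finset.mem_coe.mp hv)) (hconstset i (a i))
    exact fun u hu => hsub hu
  -- dimensions
  set k := Aset.card with hkdef
  set l := Asetᶜ.card with hldef
  have hkl : k + l = d := by
    rw [hkdef, hldef, Finset.card_add_card_compl, Fintype.card_fin]
  have hk1 : 1 ≤ k := by
    rcases Finset.eq_empty_or_nonempty Aset with hA | hA
    · exfalso
      refine hnp₁ a ?_
      obtain ⟨v₁, hv₁⟩ := hne₁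
      have hVa : ∀ v ∈ V₁, v = a := by
        intro v hv
        funext i
        exact hmemA' i (by simp [hA]) v hv
      have hVs : (V₁ : Set (Fin d → ℝ)) = {a} := by
        apply Set.Subset.antisymm
        · intro v hv
          exact hVa v (Finset.mem_coe.mp hv)
        · intro z hz
          rw [Set.mem_singleton_iff] at hz
          subst hz
          rw [← hVa v₁ hv₁]
          exact Finset.mem_coe.mpr hv₁
      rw [hVs, convexHull_singleton]
    · rw [hkdef]
      exact hA.card_pos
  have hl1 : 1 ≤ l := by
    rcases Finset.eq_empty_or_nonempty Asetᶜ with hA | hA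
    · exfalso
      refine hnp₂ b ?_
      obtain ⟨w₁, hw₁⟩ := hne₂
      have hallA : ∀ i : Fin d, i ∈ Aset := by
        intro i
        by_contra hi
        have : i ∈ Asetᶜ := Finset.mem_compl.mpr hi
        rw [hA] at this
        exact absurd this (Finset.notMem_empty i)
      have hVb : ∀ w ∈ V₂, w = b := by
        intro w hw
        funext i
        exact hmemA i (hallA i) w hw
      have hVs : (V₂ : Set (Fin d → ℝ)) = {b} := by
        apply Set.Subset.antisymm
        · intro w hw
          exact hVb w (Finset.mem_coe.mp hw)
        · intro z hz
          rw [Set.mem_singleton_iff] at hz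
          subst hz
          rw [← hVb w₁ hw₁]
          exact Finset.mem_coe.mpr hw₁
      rw [hVs, convexHull_singleton]
    · rw [hldef]
      exact hA.card_pos
  -- the coordinate permutation
  have cardA : Fintype.card {i // i ∈ Aset} = k := by
    rw [Fintype.card_coe]
  have cardB : Fintype.card {i : Fin d // i ∉ Aset} = l := by
    rw [Fintype.card_subtype_compl, Fintype.card_coe, Fintype.card_fin, hldef,
      Finset.card_compl, Fintype.card_fin]
  set eA : {i // i ∈ Aset} ≃ Fin k := Fintype.equivFinOfCardEq cardA with heA
  set eB : {i : Fin d // i ∉ Aset} ≃ Fin l := Fintype.equivFinOfCardEq cardB with heB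
  set g : Fin d ≃ Fin k ⊕ Fin l :=
    ((Equiv.sumCompl (· ∈ Aset)).symm).trans (eA.sumCongr eB) with hg
  have hgl : ∀ j : Fin k, g.symm (Sum.inl j) = ((eA.symm j : {i // i ∈ Aset}) : Fin d) :=
    fun j => rfl
  have hgr : ∀ j : Fin l, g.symm (Sum.inr j) = ((eB.symm j : {i : Fin d // i ∉ Aset}) : Fin d) :=
    fun j => rfl
  have hglA : ∀ j : Fin k, g.symm (Sum.inl j) ∈ Aset := fun j => (eA.symm j).2
  have hgrA : ∀ j : Fin l, g.symm (Sum.inr j) ∉ Aset := fun j => (eB.symm j).2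
  have hsurjl : ∀ i ∈ Aset, ∃ j : Fin k, g.symm (Sum.inl j) = i := by
    intro i hi
    refine ⟨eA ⟨i, hi⟩, ?_⟩
    rw [hgl, Equiv.symm_apply_apply]
  have hsurjr : ∀ i : Fin d, i ∉ Aset → ∃ j : Fin l, g.symm (Sum.inr j) = i := by
    intro i hi
    refine ⟨eB ⟨i, hi⟩, ?_⟩
    rw [hgr, Equiv.symm_apply_apply]
  -- the two factors
  set ψ₁ : (Fin d → ℝ) → (Fin k → ℝ) :=
    fun u => (fun j => u (g.symm (Sum.inl j)) + b (g.symm (Sum.inl j))) with hψ₁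
  set ψ₂ : (Fin d → ℝ) → (Fin l → ℝ) :=
    fun w => (fun j => w (g.symm (Sum.inr j)) + a (g.symm (Sum.inr j))) with hψ₂
  set R₁ : Set (Fin k → ℝ) := ψ₁ '' (convexHull ℝ (V₁ : Set (Fin d → ℝ))) with hR₁
  set R₂ : Set (Fin l → ℝ) := ψ₂ '' (convexHull ℝ (V₂ : Set (Fin d → ℝ))) with hR₂
  -- the product presentation
  have hprod : P = {x : Fin d → ℝ | (fun j => x (g.symm (Sum.inl j))) ∈ R₁ ∧
      (fun j => x (g.symm (Sum.inr j))) ∈ R₂} := by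
    rw [hPsum]
    ext x
    constructor
    · intro hx
      obtain ⟨u, hu, w, hw, hxe⟩ := Set.mem_add.mp hx
      subst hxe
      constructor
      · refine ⟨u, hu, ?_⟩
        funext j
        show u (g.symm (Sum.inl j)) + b (g.symm (Sum.inl j)) = (u + w) (g.symm (Sum.inl j))
        rw [Pi.add_apply, hconst₂ _ (hglA j) w hw]
      · refine ⟨w, hw, ?_⟩
        funext j
        show w (g.symm (Sum.inr j)) + a (g.symm (Sum.inr j)) = (u + w) (g.symm (Sum.inr j))
        rw [Pi.add_apply, hconst₁ _ (hgrA j) u hu, add_comm]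
    · rintro ⟨⟨u, hu, hψu⟩, ⟨w, hw, hψw⟩⟩
      refine Set.mem_add.mpr ⟨u, hu, w, hw, ?_⟩
      funext i
      rw [Pi.add_apply]
      by_cases hi : i ∈ Aset
      · obtain ⟨j, hj⟩ := hsurjl i hi
        have hc : u (g.symm (Sum.inl j)) + b (g.symm (Sum.inl j)) =
            x (g.symm (Sum.inl j)) := congrFun hψu j
        rw [hj] at hc
        rw [hconst₂ i hi w hw]
        exact hc
      · obtain ⟨j, hj⟩ := hsurjr i hi
        have hc : w (g.symm (Sum.inr j)) + a (g.symm (Sum.inr j)) =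
            x (g.symm (Sum.inr j)) := congrFun hψw j
        rw [hj] at hc
        rw [hconst₁ i hi u hu, add_comm]
        exact hc
  -- the projections as continuous linear maps
  set πALM : (Fin d → ℝ) →L[ℝ] (Fin k → ℝ) :=
    ContinuousLinearMap.pi (fun j => ContinuousLinearMap.proj (g.symm (Sum.inl j)))
    with hπALM
  set πBLM : (Fin d → ℝ) →L[ℝ] (Fin l → ℝ) :=
    ContinuousLinearMap.pi (fun j => ContinuousLinearMap.proj (g.symm (Sum.inr j)))
    with hπBLM
  have hπAapp : ∀ y : Fin d → ℝ, πALM y = fun j => y (g.symm (Sum.inl j)) :=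
    fun y => rfl
  have hπBapp : ∀ y : Fin d → ℝ, πBLM y = fun j => y (g.symm (Sum.inr j)) :=
    fun y => rfl
  -- `ψ₁`, `ψ₂` as affine maps
  have πALin : (Fin d → ℝ) →ₗ[ℝ] (Fin k → ℝ) := ↑πALM
  have πBLin : (Fin d → ℝ) →ₗ[ℝ] (Fin l → ℝ) := ↑πBLM
  have hψ₁A : ∃ f : (Fin d → ℝ) →ᵃ[ℝ] (Fin k → ℝ), ⇑f = ψ₁ := by
    refine ⟨⟨ψ₁, ↑πALM, ?_⟩, rfl⟩
    intro p v
    funext j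
    show (v + p) (g.symm (Sum.inl j)) + b (g.symm (Sum.inl j)) =
      v (g.symm (Sum.inl j)) + (p (g.symm (Sum.inl j)) + b (g.symm (Sum.inl j)))
    rw [Pi.add_apply]
    ring
  have hψ₂A : ∃ f : (Fin d → ℝ) →ᵃ[ℝ] (Fin l → ℝ), ⇑f = ψ₂ := by
    refine ⟨⟨ψ₂, ↑πBLM, ?_⟩, rfl⟩
    intro p v
    funext j
    show (v + p) (g.symm (Sum.inr j)) + a (g.symm (Sum.inr j)) =
      v (g.symm (Sum.inr j)) + (p (g.symm (Sum.inr j)) + a (g.symm (Sum.inr j)))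
    rw [Pi.add_apply]
    ring
  obtain ⟨ψ₁A, hψ₁Ae⟩ := hψ₁A
  obtain ⟨ψ₂A, hψ₂Ae⟩ := hψ₂A
  -- 0/1-ness of the factors
  have h01₁ : Is01Polytope R₁ := by
    refine ⟨V₁.image ψ₁, ?_, ?_⟩
    · intro z hz j
      rw [Finset.mem_image] at hz
      obtain ⟨v, hv, rfl⟩ := hz
      obtain ⟨wm, hwm, hwme⟩ := Finset.exists_mem_eq_inf' hne₂
        (fun w => w (g.symm (Sum.inl j)))
      have hbj : b (g.symm (Sum.inl j)) = wm (g.symm (Sum.inl j)) := hwme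
      have hkj := hkey v hv wm hwm (g.symm (Sum.inl j))
      obtain ⟨zv, hzv⟩ := hint₁ v hv (g.symm (Sum.inl j))
      obtain ⟨zw, hzw⟩ := hint₂ wm hwm (g.symm (Sum.inl j))
      have hval : ψ₁ v j = v (g.symm (Sum.inl j)) + b (g.symm (Sum.inl j)) := rfl
      rw [hval, hbj, hzv, hzw]
      have h0r : (0:ℝ) ≤ (zv:ℝ) + (zw:ℝ) := by
        have h' := hkj.1
        rwa [hzv, hzw] at h'
      have h1r : (zv:ℝ) + (zw:ℝ) ≤ 1 := by
        have h' := hkj.2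
        rwa [hzv, hzw] at h'
      have h0 : (0:ℤ) ≤ zv + zw := by exact_mod_cast h0r
      have h1 : zv + zw ≤ 1 := by exact_mod_cast h1r
      have hor : zv + zw = 0 ∨ zv + zw = 1 := by omega
      rcases hor with h | h
      · left
        rw [← Int.cast_add, h, Int.cast_zero]
      · right
        rw [← Int.cast_add, h, Int.cast_one]
    · rw [Finset.coe_image, hR₁, ← hψ₁Ae]
      exact AffineMap.image_convexHull ψ₁A _
  have h01₂ : Is01Polytope R₂ := by
    refine ⟨V₂.image ψ₂, ?_, ?_⟩
    · intro z hz j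
      rw [Finset.mem_image] at hz
      obtain ⟨w, hw, rfl⟩ := hz
      obtain ⟨vm, hvm, hvme⟩ := Finset.exists_mem_eq_inf' hne₁
        (fun v => v (g.symm (Sum.inr j)))
      have haj : a (g.symm (Sum.inr j)) = vm (g.symm (Sum.inr j)) := hvme
      have hkj := hkey vm hvm w hw (g.symm (Sum.inr j))
      obtain ⟨zw, hzw⟩ := hint₂ w hw (g.symm (Sum.inr j))
      obtain ⟨zv, hzv⟩ := hint₁ vm hvm (g.symm (Sum.inr j))
      have hval : ψ₂ w j = w (g.symm (Sum.inr j)) + a (g.symm (Sum.inr j)) := rfl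
      rw [hval, haj, hzw, hzv]
      have h0r : (0:ℝ) ≤ (zw:ℝ) + (zv:ℝ) := by
        have h' := hkj.1
        rw [hzv, hzw] at h'
        linarith
      have h1r : (zw:ℝ) + (zv:ℝ) ≤ 1 := by
        have h' := hkj.2
        rw [hzv, hzw] at h'
        linarith
      have h0 : (0:ℤ) ≤ zw + zv := by exact_mod_cast h0r
      have h1 : zw + zv ≤ 1 := by exact_mod_cast h1r
      have hor : zw + zv = 0 ∨ zw + zv = 1 := by omega
      rcases hor with h | h
      · left
        rw [← Int.cast_add, h, Int.cast_zero]
      · right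
        rw [← Int.cast_add, h, Int.cast_one]
    · rw [Finset.coe_image, hR₂, ← hψ₂Ae]
      exact AffineMap.image_convexHull ψ₂A _
  -- full-dimensionality of the factors
  have hsurjA : Function.Surjective πALM := by
    intro z
    refine ⟨fun i => Sum.elim z 0 (g i), ?_⟩
    rw [hπAapp]
    funext j
    show Sum.elim z (0 : Fin l → ℝ) (g (g.symm (Sum.inl j))) = z j
    rw [Equiv.apply_symm_apply]
    rfl
  have hsurjB : Function.Surjective πBLM := by
    intro z
    refine ⟨fun i => Sum.elim 0 z (g i), ?_⟩
    rw [hπBapp]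
    funext j
    show Sum.elim (0 : Fin k → ℝ) z (g (g.symm (Sum.inr j))) = z j
    rw [Equiv.apply_symm_apply]
    rfl
  have hintR₁ : (interior R₁).Nonempty := by
    obtain ⟨x, hx⟩ := hfull
    have hsub : ⇑πALM '' interior P ⊆ R₁ := by
      rintro _ ⟨y, hy, rfl⟩
      have hyP : y ∈ P := interior_subset hy
      rw [hprod] at hyP
      rw [hπAapp]
      exact hyP.1
    exact ⟨πALM x, interior_maximal hsub
      (πALM.isOpenMap hsurjA _ isOpen_interior) ⟨x, hx, rfl⟩⟩
  have hintR₂ : (interior R₂).Nonempty := by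
    obtain ⟨x, hx⟩ := hfull
    have hsub : ⇑πBLM '' interior P ⊆ R₂ := by
      rintro _ ⟨y, hy, rfl⟩
      have hyP : y ∈ P := interior_subset hy
      rw [hprod] at hyP
      rw [hπBapp]
      exact hyP.2
    exact ⟨πBLM x, interior_maximal hsub
      (πBLM.isOpenMap hsurjB _ isOpen_interior) ⟨x, hx, rfl⟩⟩
  exact ⟨k, l, g, R₁, R₂, hk1, hl1, hkl, h01₁, hintR₁, h01₂, hintR₂, hprod⟩

end Stmt17
namespace Stmt17

lemma main : ∀ d : ℕ, 1 ≤ d → ∀ P : Set (Fin d → ℝ), Is01Polytope P →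
    (interior P).Nonempty → DecompEq P := by
  intro d
  induction d using Nat.strong_induction_on with
  | _ d ih =>
    intro hd P hP hfull
    by_cases hind : IsIndecomposable P
    · exact decompEq_base P hd hP hfull hind
    · obtain ⟨k, l, g, R₁, R₂, hk1, hl1, hkl, h01₁, hint₁, h01₂, hint₂, hprod⟩ :=
        geo hd P hP hfull hind
      have hkd : k < d := by omega
      have hld : l < d := by omega
      exact decompEq_combine g hkl hprod
        (ih k hkd hk1 R₁ h01₁ hint₁) (ih l hld hl1 R₂ h01₂ hint₂)

end Stmt17

theorem stmt_17 {d : ℕ} (hd : 1 ≤ d) (P : Set (Fin d → ℝ))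
    (hP : Is01Polytope P) (hfull : (interior P).Nonempty) :
    ∃ (s : ℕ) (dims : Fin s → ℕ) (e : Fin d ≃ (Σ i : Fin s, Fin (dims i)))
      (Q : ∀ i : Fin s, Set (Fin (dims i) → ℝ)),
      1 ≤ s ∧ (∀ i, 1 ≤ dims i) ∧ (∑ i, dims i = d) ∧
      (∀ i, Is01Polytope (Q i) ∧ (interior (Q i)).Nonempty ∧
        IsIndecomposable (Q i)) ∧
      (fun (x : Fin d → ℝ) => x ∘ e.symm) '' P =
        {y : (Σ i : Fin s, Fin (dims i)) → ℝ | ∀ i, (fun j => y ⟨i, j⟩) ∈ Q i} := by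
  obtain ⟨s, dims, e, Q, hs, hdims, hsum, hQ, hset⟩ := Stmt17.main d hd P hP hfull
  refine ⟨s, dims, e, Q, hs, hdims, hsum, hQ, ?_⟩
  have hsurj : Function.Surjective (fun (x : Fin d → ℝ) => x ∘ e.symm) := by
    intro y
    refine ⟨y ∘ e, ?_⟩
    funext p
    show y (e (e.symm p)) = y p
    rw [Equiv.apply_symm_apply]
  have hpre : P = (fun (x : Fin d → ℝ) => x ∘ e.symm) ⁻¹'
      {y : (Σ i : Fin s, Fin (dims i)) → ℝ | ∀ i, (fun j => y ⟨i, j⟩) ∈ Q i} := hset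
  rw [hpre]
  exact Set.image_preimage_eq _ hsurj
end
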